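/- Let p(x,y) = αxy + βyx be a nonzero multilinear polynomial of degree two over a field K. Then the image of p on UT_n is UT_n if α + β ≠ 0, and is exactly the set UT_n^{(0)} of strictly upper triangular matrices if α + β = 0. -/

import Mathlib

open Matrix Finset

section Aux
variable {K : Type*} [Field K] {n : ℕ}

lemma ut_mul {A B : Matrix (Fin n) (Fin n) K}
    (hA : ∀ a b : Fin n, b < a → A a b = 0) (hB : ∀ a b : Fin n, b < a → B a b = 0)
    {a b : Fin n} (h : b < a) : (A * B) a b = 0 := by
  rw [Matrix.mul_apply]
  refine Finset.sum_eq_zero fun k _ => ?_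
  rcases lt_or_ge k a with hk | hk
  · rw [hA a k hk, zero_mul]
  · rw [hB k b (lt_of_lt_of_le h hk), mul_zero]

lemma ut_mul_diag {A B : Matrix (Fin n) (Fin n) K}
    (hA : ∀ a b : Fin n, b < a → A a b = 0) (hB : ∀ a b : Fin n, b < a → B a b = 0)
    (a : Fin n) : (A * B) a a = A a a * B a a := by
  rw [Matrix.mul_apply]
  refine Fintype.sum_eq_single a (fun k hk => ?_)
  rcases lt_or_ge k a with hk' | hk'
  · rw [hA a k hk', zero_mul]
  · rw [hB k a (lt_of_le_of_ne hk' (Ne.symm hk)), mul_zero]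

/-- shift matrix -/
def shiftM (n : ℕ) (K : Type*) [Field K] : Matrix (Fin n) (Fin n) K :=
  fun i j => if (i : ℕ) + 1 = (j : ℕ) then 1 else 0

lemma shiftM_ut : ∀ a b : Fin n, b < a → shiftM n K a b = 0 := by
  intro a b h
  simp only [shiftM]
  exact if_neg (by omega)

/-- solves [shiftM, B] = X for strictly upper triangular X -/
def solveB (X : Matrix (Fin n) (Fin n) K) : Matrix (Fin n) (Fin n) K :=
  fun i j => ∑ t ∈ Finset.range i,
    if h : t < n ∧ t + ((j : ℕ) - i) + 1 < n ∧ (i : ℕ) ≤ j then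
      X ⟨t, h.1⟩ ⟨t + ((j : ℕ) - i) + 1, h.2.1⟩ else 0

lemma solveB_ut (X : Matrix (Fin n) (Fin n) K) :
    ∀ a b : Fin n, b < a → solveB X a b = 0 := by
  intro a b h
  refine Finset.sum_eq_zero fun t _ => ?_
  rw [dif_neg]
  omega

lemma shift_mul (B : Matrix (Fin n) (Fin n) K) (i j : Fin n) :
    (shiftM n K * B) i j =
      if h : (i : ℕ) + 1 < n then B ⟨(i : ℕ) + 1, h⟩ j else 0 := by
  rw [Matrix.mul_apply]
  split
  · next h =>
    have hs : ∑ k, shiftM n K i k * B k j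
        = shiftM n K i ⟨(i : ℕ) + 1, h⟩ * B ⟨(i : ℕ) + 1, h⟩ j := by
      refine Fintype.sum_eq_single _ (fun k hk => ?_)
      have hc : ¬ ((i : ℕ) + 1 = (k : ℕ)) := fun hc => hk (Fin.ext hc.symm)
      simp only [shiftM]
      rw [if_neg hc, zero_mul]
    rw [hs]
    have h1 : shiftM n K i ⟨(i : ℕ) + 1, h⟩ = 1 := if_pos rfl
    rw [h1, one_mul]
  · next h =>
    refine Finset.sum_eq_zero fun k _ => ?_
    simp only [shiftM]
    rw [if_neg (by omega), zero_mul]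

lemma mul_shift (B : Matrix (Fin n) (Fin n) K) (i j : Fin n) :
    (B * shiftM n K) i j =
      if 0 < (j : ℕ) then B i ⟨(j : ℕ) - 1, Nat.lt_of_le_of_lt (Nat.sub_le _ _) j.isLt⟩
      else 0 := by
  rw [Matrix.mul_apply]
  split
  · next h =>
    have hlt : (j : ℕ) - 1 < n := Nat.lt_of_le_of_lt (Nat.sub_le _ _) j.isLt
    have hs : ∑ k, B i k * shiftM n K k j
        = B i ⟨(j : ℕ) - 1, hlt⟩ * shiftM n K ⟨(j : ℕ) - 1, hlt⟩ j := by
      refine Fintype.sum_eq_single _ (fun k hk => ?_)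
      have hc : ¬ ((k : ℕ) + 1 = (j : ℕ)) := by
        intro hc; apply hk; apply Fin.ext; show (k : ℕ) = (j : ℕ) - 1; omega
      simp only [shiftM]
      rw [if_neg hc, mul_zero]
    rw [hs]
    have h1 : shiftM n K ⟨(j : ℕ) - 1, hlt⟩ j = 1 := if_pos (by show (j:ℕ)-1+1 = (j:ℕ); omega)
    rw [h1, mul_one]
  · next h =>
    refine Finset.sum_eq_zero fun k _ => ?_
    simp only [shiftM]
    rw [if_neg (by omega), mul_zero]
end Aux

/-- For the nonzero multilinear polynomial `p(x,y) = αxy + βyx` over a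
field `K`, the image of `p` on `UT_n` is `UT_n` when `α + β ≠ 0`, and is exactly the set
`UT_n^{(0)}` of strictly upper triangular matrices when `α + β = 0`. -/
theorem stmt9 {K : Type*} [Field K] {n : ℕ} (hn : 2 ≤ n)
    (α β : K) (hp : ¬(α = 0 ∧ β = 0)) :
    (α + β ≠ 0 →
      {X : Matrix (Fin n) (Fin n) K | ∃ A B : Matrix (Fin n) (Fin n) K,
          (∀ a b : Fin n, b < a → A a b = 0) ∧ (∀ a b : Fin n, b < a → B a b = 0) ∧
          X = α • (A * B) + β • (B * A)}
        = {X : Matrix (Fin n) (Fin n) K | ∀ a b : Fin n, b < a → X a b = 0}) ∧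
    (α + β = 0 →
      {X : Matrix (Fin n) (Fin n) K | ∃ A B : Matrix (Fin n) (Fin n) K,
          (∀ a b : Fin n, b < a → A a b = 0) ∧ (∀ a b : Fin n, b < a → B a b = 0) ∧
          X = α • (A * B) + β • (B * A)}
        = {X : Matrix (Fin n) (Fin n) K | ∀ a b : Fin n, b ≤ a → X a b = 0}) := by
  constructor
  · -- case α + β ≠ 0
    intro hs
    ext X
    simp only [Set.mem_setOf_eq]
    constructor
    · rintro ⟨A, B, hA, hB, rfl⟩ a b h
      simp only [Matrix.add_apply, Matrix.smul_apply, smul_eq_mul]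
      rw [ut_mul hA hB h, ut_mul hB hA h, mul_zero, mul_zero, add_zero]
    · intro hX
      refine ⟨1, (α + β)⁻¹ • X, ?_, ?_, ?_⟩
      · intro a b h
        exact Matrix.one_apply_ne (Fin.ne_of_gt h)
      · intro a b h
        simp only [Matrix.smul_apply, hX a b h, smul_zero]
      · rw [Matrix.one_mul, Matrix.mul_one, smul_smul, smul_smul, ← add_smul,
          ← add_mul, mul_inv_cancel₀ hs, one_smul]
  · -- case α + β = 0
    intro hs
    have hβ : β = -α := by linear_combination hs
    have hα : α ≠ 0 := fun h => hp ⟨h, by rw [hβ, h, neg_zero]⟩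
    ext X
    simp only [Set.mem_setOf_eq]
    constructor
    · rintro ⟨A, B, hA, hB, rfl⟩ a b h
      simp only [Matrix.add_apply, Matrix.smul_apply, smul_eq_mul]
      rcases lt_or_eq_of_le h with h' | h'
      · rw [ut_mul hA hB h', ut_mul hB hA h', mul_zero, mul_zero, add_zero]
      · subst h'
        rw [ut_mul_diag hA hB, ut_mul_diag hB hA, hβ]
        ring
    · intro hX
      set B := solveB (α⁻¹ • X) with hBdef
      refine ⟨shiftM n K, B, shiftM_ut, solveB_ut _, ?_⟩
      ext i j
      simp only [Matrix.add_apply, Matrix.smul_apply, smul_eq_mul]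
      rw [shift_mul, mul_shift]
      rcases le_or_gt (j : ℕ) (i : ℕ) with hij | hij
      · -- on/below diagonal: everything is zero
        rw [hX i j hij]
        have h1 : ∀ h : (i : ℕ) + 1 < n, B ⟨(i : ℕ) + 1, h⟩ j = 0 := by
          intro h
          refine Finset.sum_eq_zero fun t _ => ?_
          rw [dif_neg]
          simp only [not_and]
          intro _ _
          omega
        have h2 : 0 < (j : ℕ) →
            B i ⟨(j : ℕ) - 1, Nat.lt_of_le_of_lt (Nat.sub_le _ _) j.isLt⟩ = 0 := by
          intro h
          refine Finset.sum_eq_zero fun t _ => ?_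
          rw [dif_neg]
          simp only [not_and]
          intro _ _
          omega
        split
        · next h =>
          rw [h1 h, mul_zero, zero_add]
          split
          · next h' => rw [h2 h', mul_zero]
          · rw [mul_zero]
        · rw [mul_zero, zero_add]
          split
          · next h' => rw [h2 h', mul_zero]
          · rw [mul_zero]
      · -- above diagonal
        have h1 : (i : ℕ) + 1 < n := lt_of_le_of_lt hij j.isLt
        rw [dif_pos h1, if_pos (by omega : 0 < (j : ℕ))]
        set jm : Fin n := ⟨(j : ℕ) - 1, Nat.lt_of_le_of_lt (Nat.sub_le _ _) j.isLt⟩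
        have key : B ⟨(i : ℕ) + 1, h1⟩ j = B i jm + α⁻¹ * X i j := by
          show solveB (α⁻¹ • X) ⟨(i : ℕ) + 1, h1⟩ j = solveB (α⁻¹ • X) i jm + α⁻¹ * X i j
          simp only [solveB]
          rw [Finset.sum_range_succ]
          congr 1
          · refine Finset.sum_congr rfl fun t ht => ?_
            simp only [Finset.mem_range] at ht
            rw [dif_pos ⟨by omega, by omega, by omega⟩, dif_pos ⟨by omega, by omega, by show (i : ℕ) ≤ (j : ℕ) - 1; omega⟩]
            simp only [Matrix.smul_apply, smul_eq_mul]
            congr 2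
            · exact Fin.ext (by show t + ((j : ℕ) - ((i : ℕ) + 1)) + 1
                = t + (((j : ℕ) - 1) - (i : ℕ)) + 1; omega)
          · rw [dif_pos ⟨by omega, by omega, by omega⟩]
            simp only [Matrix.smul_apply, smul_eq_mul]
            congr 2
            exact Fin.ext (by show (i : ℕ) + ((j : ℕ) - ((i : ℕ) + 1)) + 1 = (j : ℕ); omega)
        rw [key, hβ]
        field_simp
        ring
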